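/- Let s₁, …, sₙ be monotone functions on a complete lattice; write c_j = s_j^* and c_{<j} = (⊔_{i<j} s_i)^*. If for all 1 < j ≤ n we have c_{<j} ∘ c_j ≤ c_j ∘ c_{<j}, then (⊔_{i≤n} s_i)^* = c_n ∘ … ∘ c_1. -/
import Mathlib


/-- The least (pre)fixpoint of `y ↦ x ⊔ s y` (Knaster–Tarski); for monotone `s`
this gives the least closure above `s`. -/
def lstar {X : Type*} [CompleteLattice X] (s : X → X) (x : X) : X :=
  sInf {y | x ⊔ s y ≤ y}

/-- The composition `c (n-1) ∘ ⋯ ∘ c 0` of a finite family of functions. -/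
def compFamily {X : Type*} : (n : ℕ) → (Fin n → X → X) → X → X
  | 0, _ => id
  | n + 1, c => c (Fin.last n) ∘ compFamily n (fun i => c i.castSucc)

section Aux
variable {X : Type*} [CompleteLattice X]

lemma lstar_le {s : X → X} {x y : X} (h : x ⊔ s y ≤ y) : lstar s x ≤ y := sInf_le h

lemma le_lstar (s : X → X) (x : X) : x ≤ lstar s x :=
  le_sInf fun _ hy => le_trans le_sup_left hy

lemma apply_lstar_le {s : X → X} (hs : Monotone s) (x : X) : s (lstar s x) ≤ lstar s x :=
  le_sInf fun y hy => le_trans (hs (sInf_le hy)) (le_trans le_sup_right hy)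

lemma lstar_prefix {s : X → X} (hs : Monotone s) (x : X) :
    x ⊔ s (lstar s x) ≤ lstar s x :=
  sup_le (le_lstar s x) (apply_lstar_le hs x)

lemma lstar_mono {s : X → X} (hs : Monotone s) : Monotone (lstar s) := by
  intro x x' hxx'
  exact lstar_le (sup_le (hxx'.trans (le_lstar s x')) (apply_lstar_le hs x'))

lemma lstar_idem {s : X → X} (hs : Monotone s) (x : X) :
    lstar s (lstar s x) = lstar s x :=
  le_antisymm (lstar_le (sup_le le_rfl (apply_lstar_le hs x))) (le_lstar s _)

lemma lstar_le_lstar {s t : X → X} (hst : ∀ y, s y ≤ t y) (x : X) :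
    lstar s x ≤ lstar t x :=
  sInf_le_sInf fun y hy => le_trans (sup_le le_sup_left ((hst y).trans le_sup_right)) hy

lemma lstar_congr {s t : X → X} (hst : ∀ y, s y = t y) (x : X) :
    lstar s x = lstar t x :=
  le_antisymm (lstar_le_lstar (fun y => (hst y).le) x)
    (lstar_le_lstar (fun y => (hst y).ge) x)

lemma lstar_bot (x : X) : lstar (fun _ : X => (⊥ : X)) x = x :=
  le_antisymm (lstar_le (by simp)) (le_lstar _ x)

/-- Key two-function lemma. -/
lemma lstar_sup {s t : X → X} (hs : Monotone s) (ht : Monotone t)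
    (h : ∀ x, lstar s (lstar t x) ≤ lstar t (lstar s x)) (x : X) :
    lstar (fun y => s y ⊔ t y) x = lstar t (lstar s x) := by
  apply le_antisymm
  · apply lstar_le
    set z := lstar t (lstar s x) with hz
    have hxz : x ≤ z := (le_lstar s x).trans (le_lstar t _)
    have htz : t z ≤ z := apply_lstar_le ht _
    have hsz : s z ≤ z := by
      have h1 : s z ≤ lstar s z := (hs (le_lstar s z)).trans (apply_lstar_le hs z)
      have h2 : lstar s z ≤ lstar t (lstar s (lstar s x)) := h (lstar s x)
      rw [lstar_idem hs] at h2
      exact h1.trans h2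
    exact sup_le hxz (sup_le hsz htz)
  · set w := lstar (fun y => s y ⊔ t y) x with hw
    have hmono' : Monotone (fun y => s y ⊔ t y) := fun a b hab => sup_le_sup (hs hab) (ht hab)
    have hsw : lstar s x ≤ w := by
      apply lstar_le
      refine sup_le (le_lstar _ x) (le_trans le_sup_left (apply_lstar_le hmono' x))
    have htw : lstar t w ≤ w := by
      apply lstar_le
      exact sup_le le_rfl (le_trans le_sup_right (apply_lstar_le hmono' x))
    exact (lstar_mono ht hsw).trans htw

end Aux

/-- If for every `j` past the first one, `c_{<j} ∘ c_j ≤ c_j ∘ c_{<j}`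
(where `c_j = s_j^*` and `c_{<j} = (⊔_{i<j} s_i)^*`), then the closure of the join
of all the `s_i` is the composition `c_{n-1} ∘ ⋯ ∘ c_0`. -/
theorem lstar_sup_family {X : Type*} [CompleteLattice X] (n : ℕ) (s : Fin n → X → X)
    (hmono : ∀ i, Monotone (s i))
    (h : ∀ j : Fin n, 0 < (j : ℕ) → ∀ x,
      lstar (fun y => ⨆ i : Fin n, ⨆ _ : i < j, s i y) (lstar (s j) x) ≤
        lstar (s j) (lstar (fun y => ⨆ i : Fin n, ⨆ _ : i < j, s i y) x)) :
    ∀ x, lstar (fun y => ⨆ i, s i y) x = compFamily n (fun i => lstar (s i)) x := by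
  induction n with
  | zero =>
    intro x
    have : ∀ y : X, (⨆ i : Fin 0, s i y) = ⊥ := by intro y; simp
    rw [lstar_congr this, lstar_bot]
    rfl
  | succ n ih =>
    intro x
    -- the restricted family
    set s' : Fin n → X → X := fun i => s i.castSucc with hs'
    have hmono' : ∀ i, Monotone (s' i) := fun i => hmono i.castSucc
    -- rewrite the big sup as a binary sup
    have hsup : ∀ y : X, (⨆ i : Fin (n+1), s i y) =
        (⨆ i : Fin n, s' i y) ⊔ s (Fin.last n) y := by
      intro y
      apply le_antisymm
      · apply iSup_le
        intro i
        rcases eq_or_ne i (Fin.last n) with rfl | hne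
        · exact le_sup_right
        · obtain ⟨j, rfl⟩ := Fin.exists_castSucc_eq.mpr hne
          exact le_trans (le_iSup (fun i : Fin n => s' i y) j) le_sup_left
      · refine sup_le (iSup_le fun j => le_iSup (fun i : Fin (n+1) => s i y) j.castSucc)
          (le_iSup (fun i : Fin (n+1) => s i y) (Fin.last n))
    -- the "below last" sup equals the sup of the restricted family
    have hbelow : ∀ y : X, (⨆ i : Fin (n+1), ⨆ _ : i < Fin.last n, s i y) =
        ⨆ i : Fin n, s' i y := by
      intro y
      apply le_antisymm
      · apply iSup_le; intro i; apply iSup_le; intro hi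
        obtain ⟨j, rfl⟩ := Fin.exists_castSucc_eq.mpr (Fin.ne_last_of_lt hi)
        exact le_iSup (fun i : Fin n => s' i y) j
      · apply iSup_le; intro j
        calc s' j y = s j.castSucc y := rfl
        _ ≤ ⨆ _ : j.castSucc < Fin.last n, s j.castSucc y :=
            le_iSup (fun _ : j.castSucc < Fin.last n => s j.castSucc y)
              (Fin.castSucc_lt_last j)
        _ ≤ _ := le_iSup (fun i : Fin (n+1) => ⨆ _ : i < Fin.last n, s i y) j.castSucc
    have hmonoSup : Monotone (fun y => ⨆ i : Fin n, s' i y) := by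
      intro a b hab
      exact iSup_mono fun i => hmono' i hab
    -- commutation for the last element
    have hcomm : ∀ y, lstar (fun y => ⨆ i : Fin n, s' i y) (lstar (s (Fin.last n)) y) ≤
        lstar (s (Fin.last n)) (lstar (fun y => ⨆ i : Fin n, s' i y) y) := by
      intro y
      rcases Nat.eq_zero_or_pos n with rfl | hn
      · have hb : ∀ z : X, (⨆ i : Fin 0, s' i z) = ⊥ := by intro z; simp
        rw [lstar_congr hb, lstar_bot, lstar_congr hb, lstar_bot]
      · have := h (Fin.last n) (by simpa using hn) y
        rw [lstar_congr hbelow, lstar_congr hbelow] at this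
        exact this
    -- hypothesis for the induction
    have h' : ∀ j : Fin n, 0 < (j : ℕ) → ∀ x,
        lstar (fun y => ⨆ i : Fin n, ⨆ _ : i < j, s' i y) (lstar (s' j) x) ≤
          lstar (s' j) (lstar (fun y => ⨆ i : Fin n, ⨆ _ : i < j, s' i y) x) := by
      intro j hj x
      have hb : ∀ y : X, (⨆ i : Fin (n+1), ⨆ _ : i < j.castSucc, s i y) =
          ⨆ i : Fin n, ⨆ _ : i < j, s' i y := by
        intro y
        apply le_antisymm
        · apply iSup_le; intro i; apply iSup_le; intro hi
          have : i < Fin.last n := lt_of_lt_of_le hi (Fin.castSucc_lt_last j).le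
          obtain ⟨k, rfl⟩ := Fin.exists_castSucc_eq.mpr (Fin.ne_last_of_lt this)
          have hk : k < j := by simpa using hi
          calc s k.castSucc y = s' k y := rfl
            _ ≤ ⨆ _ : k < j, s' k y := le_iSup (fun _ : k < j => s' k y) hk
            _ ≤ _ := le_iSup (fun i : Fin n => ⨆ _ : i < j, s' i y) k
        · apply iSup_le; intro k; apply iSup_le; intro hk
          have hk' : k.castSucc < j.castSucc := by simpa using hk
          calc s' k y = s k.castSucc y := rfl
            _ ≤ ⨆ _ : k.castSucc < j.castSucc, s k.castSucc y :=
              le_iSup (fun _ : k.castSucc < j.castSucc => s k.castSucc y) hk'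
            _ ≤ _ := le_iSup (fun i : Fin (n+1) => ⨆ _ : i < j.castSucc, s i y) k.castSucc
      have := h j.castSucc (by simpa using hj) x
      rw [lstar_congr hb, lstar_congr hb] at this
      exact this
    have key := lstar_sup hmonoSup (hmono (Fin.last n)) hcomm x
    rw [lstar_congr hsup, key, ih s' hmono' h']
    rfl
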